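/- Let X be a finite set. The maximum cardinality of a commutative nilpotent subsemigroup of T(X) whose zero is a constant map is ξ(|X|) = max{t^(|X|−t) : 1 ≤ t ≤ |X|}. -/

import Mathlib

/-- `S` is a subsemigroup of the full transformation semigroup on `X`
(maps act on the right, so the product `β·γ` is `γ ∘ β`). -/
def IsTransSub {X : Type*} (S : Set (X → X)) : Prop :=
  ∀ β ∈ S, ∀ γ ∈ S, (γ ∘ β) ∈ S

/-- `e` is a zero element of `S`: `βe = eβ = e` for all `β ∈ S`. -/
def IsZeroElem {X : Type*} (S : Set (X → X)) (e : X → X) : Prop :=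
  e ∈ S ∧ ∀ β ∈ S, e ∘ β = e ∧ β ∘ e = e

/-- `S` is nilpotent with zero `e`: some `m ≥ 1` such that every product of
`m` elements of `S` equals `e`. -/
def IsNilpotentSub {X : Type*} (S : Set (X → X)) (e : X → X) : Prop :=
  ∃ m : ℕ, 0 < m ∧ ∀ L : List (X → X), L.length = m → (∀ f ∈ L, f ∈ S) →
    L.foldr (· ∘ ·) id = e

/-- `S` is commutative. -/
def IsCommSub {X : Type*} (S : Set (X → X)) : Prop :=
  ∀ β ∈ S, ∀ γ ∈ S, β ∘ γ = γ ∘ β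

/-- `S` is a null semigroup with zero `e`: every product of two elements is `e`. -/
def IsNullSub {X : Type*} (S : Set (X → X)) (e : X → X) : Prop :=
  ∀ β ∈ S, ∀ γ ∈ S, γ ∘ β = e

/-- `ξ(n) = max { t ^ (n - t) : 1 ≤ t ≤ n }`. -/
def xi (n : ℕ) : ℕ := (Finset.Icc 1 n).sup (fun t => t ^ (n - t))

/-- `α(n) = max { t ∈ {1,…,n} : t ^ (n - t) = ξ(n) }`. -/
def alphaMax (n : ℕ) : ℕ :=
  ((Finset.Icc 1 n).filter (fun t => t ^ (n - t) = xi n)).sup id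

section Aux

variable {X : Type*}

lemma foldr_append_comp (L₁ L₂ : List (X → X)) :
    (L₁ ++ L₂).foldr (· ∘ ·) id = L₁.foldr (· ∘ ·) id ∘ L₂.foldr (· ∘ ·) id := by
  induction L₁ with
  | nil => simp
  | cons f L ih => simp [Function.comp_assoc, ih]

lemma comm_foldr {S : Set (X → X)} (hcomm : IsCommSub S)
    {β : X → X} (hβ : β ∈ S) (L : List (X → X)) (hL : ∀ f ∈ L, f ∈ S) :
    β ∘ L.foldr (· ∘ ·) id = L.foldr (· ∘ ·) id ∘ β := by
  induction L with
  | nil => simp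
  | cons f L ih =>
    have h1 : β ∘ f = f ∘ β := hcomm β hβ f (hL f (by simp))
    have h2 := ih (fun g hg => hL g (by simp [hg]))
    simp only [List.foldr_cons]
    calc β ∘ (f ∘ L.foldr (· ∘ ·) id) = (β ∘ f) ∘ L.foldr (· ∘ ·) id := by
            rw [Function.comp_assoc]
      _ = f ∘ (β ∘ L.foldr (· ∘ ·) id) := by rw [h1, Function.comp_assoc]
      _ = (f ∘ L.foldr (· ∘ ·) id) ∘ β := by rw [h2, Function.comp_assoc]

lemma long_foldr_eq {S : Set (X → X)} {c : X} {m : ℕ}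
    (hm : ∀ L : List (X → X), L.length = m → (∀ f ∈ L, f ∈ S) →
      L.foldr (· ∘ ·) id = Function.const X c)
    (L : List (X → X)) (hL : ∀ f ∈ L, f ∈ S) (hlen : m ≤ L.length) :
    L.foldr (· ∘ ·) id = Function.const X c := by
  have hsplit : L = L.take m ++ L.drop m := (List.take_append_drop m L).symm
  have htake : (L.take m).foldr (· ∘ ·) id = Function.const X c := by
    refine hm _ (by simp [hlen]) (fun f hf => hL f (List.mem_of_mem_take hf))
  rw [hsplit, foldr_append_comp, htake]
  rfl

end Aux

section Key
variable {X : Type*}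

/-- Key injectivity: two elements of a commutative nilpotent subsemigroup with constant
zero that agree outside the union of all ranges are equal. -/
lemma key_inj {S : Set (X → X)} {c : X}
    (hcomm : IsCommSub S)
    (hfix : ∀ β ∈ S, β c = c)
    (hnil : IsNilpotentSub S (Function.const X c))
    {A : Set X} (hA : A = ⋃ β ∈ S, Set.range β)
    {β β' : X → X} (hβ : β ∈ S) (hβ' : β' ∈ S)
    (hagree : ∀ x ∉ A, β x = β' x) : β = β' := by
  obtain ⟨m, -, hm⟩ := hnil
  have aux : ∀ d : ℕ, ∀ L : List (X → X), (∀ f ∈ L, f ∈ S) → m ≤ L.length + d →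
      ∀ x : X, β (L.foldr (· ∘ ·) id x) = β' (L.foldr (· ∘ ·) id x) := by
    intro d
    induction d with
    | zero =>
      intro L hL hlen x
      have : L.foldr (· ∘ ·) id = Function.const X c :=
        long_foldr_eq hm L hL (by simpa using hlen)
      rw [this]
      simp [hfix β hβ, hfix β' hβ']
    | succ d ih =>
      intro L hL hlen x
      by_cases hx : x ∈ A
      · -- x = γ y for some γ ∈ S
        rw [hA] at hx
        simp only [Set.mem_iUnion, Set.mem_range] at hx
        obtain ⟨γ, hγ, y, hy⟩ := hx
        have hL' : ∀ f ∈ L ++ [γ], f ∈ S := by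
          intro f hf
          rcases List.mem_append.1 hf with h | h
          · exact hL f h
          · simp at h; subst h; exact hγ
        have := ih (L ++ [γ]) hL' (by simp; omega) y
        rw [foldr_append_comp] at this
        simpa [hy] using this
        -- note: (L ++ [γ]).foldr id y = L.foldr id (γ y) = L.foldr id x
      · -- x outside A: β x = β' x, and β commutes past the foldr
        have h1 : β (L.foldr (· ∘ ·) id x) = L.foldr (· ∘ ·) id (β x) :=
          congrFun (comm_foldr hcomm hβ L hL) x
        have h2 : β' (L.foldr (· ∘ ·) id x) = L.foldr (· ∘ ·) id (β' x) :=
          congrFun (comm_foldr hcomm hβ' L hL) x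
        rw [h1, h2, hagree x hx]
  funext x
  have := aux m [] (by simp) (by simp) x
  simpa using this

end Key

section UB
variable {X : Type*} [Fintype X]

lemma upper_bound {S : Set (X → X)} {e : X → X}
    (_hsub : IsTransSub S) (hcomm : IsCommSub S) (hzero : IsZeroElem S e)
    (hnil : IsNilpotentSub S e) (hconst : ∃ c : X, e = Function.const X c) :
    S.ncard ≤ xi (Fintype.card X) := by
  classical
  obtain ⟨c, rfl⟩ := hconst
  set n := Fintype.card X with hn
  -- every β ∈ S fixes c
  have hfix : ∀ β ∈ S, β c = c := by
    intro β hβ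
    have := congrFun (hzero.2 β hβ).2 c
    simpa using this
  set A : Set X := ⋃ β ∈ S, Set.range β with hA
  have hcA : c ∈ A := by
    rw [hA]
    simp only [Set.mem_iUnion, Set.mem_range]
    exact ⟨_, hzero.1, c, rfl⟩
  have hrange : ∀ β ∈ S, ∀ x : X, β x ∈ A := by
    intro β hβ x
    rw [hA]
    simp only [Set.mem_iUnion, Set.mem_range]
    exact ⟨β, hβ, x, rfl⟩
  -- injection of S into (↥Aᶜ → ↥A)
  let Φ : ↥S → (↥(Aᶜ) → ↥A) := fun β x => ⟨β.1 x.1, hrange β.1 β.2 x.1⟩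
  have hΦ : Function.Injective Φ := by
    intro β β' h
    have hag : ∀ x ∉ A, β.1 x = β'.1 x := by
      intro x hx
      have := congrFun h ⟨x, hx⟩
      exact congrArg Subtype.val this
    exact Subtype.ext (key_inj hcomm hfix hnil hA β.2 β'.2 hag)
  have hcard1 : S.ncard ≤ Nat.card (↥(Aᶜ) → ↥A) := by
    rw [← Nat.card_coe_set_eq]
    exact Nat.card_le_card_of_injective Φ hΦ
  have hcard2 : Nat.card (↥(Aᶜ) → ↥A) = A.ncard ^ (Aᶜ).ncard := by
    rw [Nat.card_fun, Nat.card_coe_set_eq, Nat.card_coe_set_eq]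
  set t := A.ncard with ht
  have htn : t ≤ n := by
    have := Set.ncard_le_ncard (Set.subset_univ A) (Set.finite_univ)
    simpa [Set.ncard_univ, hn] using this
  have ht1 : 1 ≤ t := (Set.ncard_pos A.toFinite).2 ⟨c, hcA⟩
  have hcompl : (Aᶜ).ncard = n - t := by
    have h1 := Set.ncard_add_ncard_compl A
    have h2 : Nat.card X = n := Nat.card_eq_fintype_card
    omega
  have hle : t ^ (n - t) ≤ xi n :=
    Finset.le_sup (f := fun t => t ^ (n - t)) (Finset.mem_Icc.2 ⟨ht1, htn⟩)
  calc S.ncard ≤ A.ncard ^ (Aᶜ).ncard := le_of_le_of_eq hcard1 hcard2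
    _ = t ^ (n - t) := by rw [hcompl]
    _ ≤ xi n := hle

end UB

section Con
variable {X : Type*} [Fintype X] [Nonempty X]

lemma construction :
    ∃ (S : Set (X → X)) (e : X → X),
      IsTransSub S ∧ IsCommSub S ∧ IsZeroElem S e ∧ IsNilpotentSub S e ∧
      (∃ c : X, e = Function.const X c) ∧ S.ncard = xi (Fintype.card X) := by
  classical
  set n := Fintype.card X with hn
  have hn1 : 1 ≤ n := Fintype.card_pos
  obtain ⟨t, htmem, hxit⟩ := Finset.exists_mem_eq_sup (Finset.Icc 1 n)
    (by exact Finset.nonempty_Icc.2 hn1) (fun t => t ^ (n - t))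
  obtain ⟨ht1, htn⟩ := Finset.mem_Icc.1 htmem
  obtain ⟨A, -, hAcard⟩ := Finset.exists_subset_card_eq (s := (Finset.univ : Finset X)) (n := t)
    (by simpa using htn)
  obtain ⟨c, hcA⟩ := Finset.card_pos.1 (by omega : 0 < A.card)
  set S : Set (X → X) := {β | (∀ x ∈ A, β x = c) ∧ ∀ x ∉ A, β x ∈ A} with hS
  have hmemA : ∀ β ∈ S, ∀ x : X, β x ∈ A := by
    intro β hβ x
    by_cases hx : x ∈ A
    · rw [hβ.1 x hx]; exact hcA
    · exact hβ.2 x hx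
  have hprod : ∀ β ∈ S, ∀ γ ∈ S, γ ∘ β = Function.const X c := by
    intro β hβ γ hγ
    funext x
    exact hγ.1 (β x) (hmemA β hβ x)
  have heS : Function.const X c ∈ S := by
    constructor
    · intro x _; rfl
    · intro x _; exact hcA
  refine ⟨S, Function.const X c, ?_, ?_, ?_, ?_, ⟨c, rfl⟩, ?_⟩
  · intro β hβ γ hγ
    rw [hprod β hβ γ hγ]; exact heS
  · intro β hβ γ hγ
    rw [hprod γ hγ β hβ, hprod β hβ γ hγ]
  · refine ⟨heS, fun β hβ => ⟨?_, ?_⟩⟩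
    · funext x; rfl
    · funext x
      exact hβ.1 c hcA
  · refine ⟨2, by norm_num, ?_⟩
    intro L hlen hmem
    obtain ⟨f, g, rfl⟩ := List.length_eq_two.1 hlen
    have hf := hmem f (by simp)
    have hg := hmem g (by simp)
    have : f ∘ g = Function.const X c := hprod g hg f hf
    simpa using this
  · -- cardinality
    have hEquiv : ↥S ≃ ({x : X // x ∉ A} → ↥A) :=
      { toFun := fun β x => ⟨β.1 x.1, β.2.2 x.1 x.2⟩
        invFun := fun g => ⟨fun x => if h : x ∈ A then c else (g ⟨x, h⟩).1, by
          constructor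
          · intro x hx; simp [hx]
          · intro x hx
            simp only [hx, dif_neg, not_false_iff]
            exact (g ⟨x, hx⟩).2⟩
        left_inv := by
          intro β
          apply Subtype.ext
          funext x
          by_cases hx : x ∈ A
          · simp [hx, (β.2.1 x hx).symm]
          · simp [hx]
        right_inv := by
          intro g
          funext x
          apply Subtype.ext
          simp [x.2] }
    have h1 : S.ncard = Nat.card ({x : X // x ∉ A} → ↥A) := by
      rw [← Nat.card_coe_set_eq]
      exact Nat.card_congr hEquiv
    have h2 : Nat.card ({x : X // x ∉ A} → ↥A) = t ^ (n - t) := by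
      rw [Nat.card_fun, Nat.card_eq_fintype_card, Nat.card_eq_fintype_card,
        Fintype.card_coe, hAcard, Fintype.card_subtype_compl]
      have h3 : Fintype.card {x : X // x ∈ A} = t := by
        rw [← hAcard]
        exact Fintype.card_of_subtype A (fun x => Iff.rfl)
      rw [h3, ← hn]
    rw [h1, h2]
    exact hxit.symm

end Con

theorem stmt9 {X : Type*} [Fintype X] [Nonempty X] :
    IsGreatest {n : ℕ | ∃ (S : Set (X → X)) (e : X → X),
        IsTransSub S ∧ IsCommSub S ∧ IsZeroElem S e ∧ IsNilpotentSub S e ∧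
        (∃ c : X, e = Function.const X c) ∧ S.ncard = n}
      (xi (Fintype.card X)) := by
  constructor
  · exact construction
  · rintro k ⟨S, e, h1, h2, h3, h4, h5, rfl⟩
    exact upper_bound h1 h2 h3 h4 h5
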